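/- For every m ≥ 1, the set A_m(X,T) is open in the hyperspace 2^X with the Hausdorff metric, where A_m(X,T) consists of all closed subsets E of X with at least two points for which there exist k ≥ 2 and open sets W_1,…,W_k ⊆ X of diameter < 1/m covering E such that ⋂_{α ∈ {1,…,k}^k} N(W_{α(1)} ∩ E, W_{α(2)}, …, W_{α(k)}) ≠ ∅. -/

import Mathlib

open TopologicalSpace

/-- The set `A_m(X,T)` of closed sets `E` with at least two points admitting `k ≥ 2`
open sets of diameter `< 1/m` covering `E` with the common hitting-time condition. -/
def Am {X : Type*} [MetricSpace X] (T : X → X) (m : ℕ) : Set (NonemptyCompacts X) :=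
  {E | (E : Set X).Nontrivial ∧ ∃ k : ℕ, 2 ≤ k ∧ ∃ W : Fin k → Set X,
    (∀ i, IsOpen (W i)) ∧ (∀ i, Metric.diam (W i) < 1 / (m : ℝ)) ∧
    (E : Set X) ⊆ ⋃ i, W i ∧
    ∃ n : ℕ, 1 ≤ n ∧ ∀ α : Fin k → Fin k,
      ∃ x ∈ (E : Set X), ∀ j : Fin k, T^[j.val * n] x ∈ W (α j)}

theorem stmt7 {X : Type*} [MetricSpace X] [CompactSpace X] (T : X → X)
    (hT : Continuous T) :
    ∀ m : ℕ, 1 ≤ m → IsOpen (Am T m) := by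
  intro m _
  rw [Metric.isOpen_iff]
  rintro E ⟨hnt, k, hk, W, hWopen, hWdiam, hWcov, n, hn, hhit⟩
  obtain ⟨a, ha, b, hb, hab⟩ := hnt
  -- thickening for the cover
  obtain ⟨δ₁, hδ₁, hthick⟩ :=
    E.isCompact.exists_thickening_subset_open (isOpen_iUnion hWopen) hWcov
  -- choose witnesses for hitting
  choose x hxE hxW using hhit
  have hU : ∀ α : Fin k → Fin k, ∃ δ > 0,
      Metric.ball (x α) δ ⊆ ⋂ j : Fin k, (T^[j.val * n]) ⁻¹' W (α j) := by
    intro α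
    have hopen : IsOpen (⋂ j : Fin k, (T^[j.val * n]) ⁻¹' W (α j)) :=
      isOpen_iInter_of_finite fun j => (hWopen _).preimage (hT.iterate _)
    exact Metric.isOpen_iff.1 hopen _ (Set.mem_iInter.2 (hxW α))
  choose δ hδpos hδball using hU
  haveI : Nonempty (Fin k) := ⟨⟨0, by omega⟩⟩
  haveI : Nonempty (Fin k → Fin k) := ⟨fun _ => Classical.arbitrary _⟩
  set δ₂ : ℝ := Finset.univ.inf' Finset.univ_nonempty δ with hδ₂def
  have hδ₂pos : 0 < δ₂ := by
    rw [hδ₂def, Finset.lt_inf'_iff]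
    intro α _; exact hδpos α
  have hab' : 0 < dist a b := dist_pos.2 hab
  set ε : ℝ := min (min δ₁ (dist a b / 3)) δ₂ with hεdef
  have hεpos : 0 < ε := by positivity
  refine ⟨ε, hεpos, ?_⟩
  intro E' hE'
  rw [Metric.mem_ball, Metric.NonemptyCompacts.dist_eq] at hE'
  have hfin : EMetric.hausdorffEdist (E' : Set X) (E : Set X) ≠ ⊤ :=
    Metric.hausdorffEdist_ne_top_of_nonempty_of_bounded E'.nonempty E.nonempty
      E'.isCompact.isBounded E.isCompact.isBounded
  have hE'E : Metric.hausdorffDist (E' : Set X) (E : Set X) < ε := hE'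
  have hEE' : Metric.hausdorffDist (E : Set X) (E' : Set X) < ε := by
    rwa [Metric.hausdorffDist_comm]
  have hεδ₁ : ε ≤ δ₁ := le_trans (min_le_left _ _) (min_le_left _ _)
  have hεab : ε ≤ dist a b / 3 := le_trans (min_le_left _ _) (min_le_right _ _)
  have hεδ₂ : ε ≤ δ₂ := min_le_right _ _
  -- nontriviality of E'
  obtain ⟨a', ha', haa'⟩ :=
    Metric.exists_dist_lt_of_hausdorffDist_lt ha hEE' (by rw [EMetric.hausdorffEdist_comm]; exact hfin)
  obtain ⟨b', hb', hbb'⟩ :=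
    Metric.exists_dist_lt_of_hausdorffDist_lt hb hEE' (by rw [EMetric.hausdorffEdist_comm]; exact hfin)
  have hnt' : (E' : Set X).Nontrivial := by
    refine ⟨a', ha', b', hb', ?_⟩
    intro h
    have h0 : dist a' b' = 0 := by rw [h, dist_self]
    have htri : dist a b ≤ dist a a' + dist a' b' + dist b' b := dist_triangle4 a a' b' b
    rw [h0, dist_comm b' b] at htri
    linarith
  refine ⟨hnt', k, hk, W, hWopen, hWdiam, ?_, n, hn, ?_⟩
  · -- cover
    intro y hy
    obtain ⟨z, hz, hyz⟩ := Metric.exists_dist_lt_of_hausdorffDist_lt hy hE'E hfin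
    exact hthick (Metric.mem_thickening_iff.2 ⟨z, hz, lt_of_lt_of_le hyz hεδ₁⟩)
  · -- hitting
    intro α
    obtain ⟨y, hy, hxy⟩ :=
      Metric.exists_dist_lt_of_hausdorffDist_lt (hxE α) hEE'
        (by rw [EMetric.hausdorffEdist_comm]; exact hfin)
    refine ⟨y, hy, ?_⟩
    have hyball : y ∈ Metric.ball (x α) (δ α) := by
      rw [Metric.mem_ball, dist_comm]
      exact lt_of_lt_of_le hxy (le_trans hεδ₂ (Finset.inf'_le _ (Finset.mem_univ α)))
    have := hδball α hyball
    rw [Set.mem_iInter] at this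
    exact this
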